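/- With the notation above: the map induced by φ from coker(1 - β₀) = V₀ / (1-β₀)(W₀) to coker(1 - ~α⁻¹) = (V/I) / (1 - ~α⁻¹)(V/I) is a group isomorphism. -/

import Mathlib

open Finsupp

/-- The shift automorphism `(α f)(n) = f (n-1)` on finitely supported functions `ℤ →₀ M`. -/
noncomputable def sh (M : Type*) [AddCommGroup M] : AddAut (ℤ →₀ M) :=
  (Finsupp.domCongr (Equiv.addRight (1:ℤ)) : (ℤ →₀ M) ≃+ (ℤ →₀ M))

/-- The sum-of-coordinates map `E : (ℤ →₀ M) → M`. -/
noncomputable def Esum (M : Type*) [AddCommGroup M] : (ℤ →₀ M) →+ M :=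
  Finsupp.liftAddHom fun _ => AddMonoidHom.id M

/-- The inclusion `φ : M → (ℤ →₀ M)` at coordinate `0`. -/
noncomputable def phi (M : Type*) [AddCommGroup M] : M →+ (ℤ →₀ M) :=
  Finsupp.singleAddHom (0:ℤ)

/-- The projection `e_i` onto coordinate `i`. -/
noncomputable def eproj (M : Type*) [AddCommGroup M] (i : ℤ) : (ℤ →₀ M) →+ (ℤ →₀ M) :=
  (Finsupp.singleAddHom i).comp (Finsupp.applyAddHom i)

/-- `q_i = ∑_{j ≤ i} e_j` : restriction to coordinates `≤ i`. -/
noncomputable def qproj (M : Type*) [AddCommGroup M] (i : ℤ) : (ℤ →₀ M) →+ (ℤ →₀ M) :=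
  Finsupp.filterAddHom (fun j => j ≤ i)

section
variable {V₀ : Type*} [AddCommGroup V₀] (W₀ : AddSubgroup V₀) (β₀ : W₀ →+ V₀)

/-- The inclusion of `W = ℤ →₀ W₀` into `V = ℤ →₀ V₀`. -/
noncomputable def iota : (ℤ →₀ W₀) →+ (ℤ →₀ V₀) :=
  Finsupp.mapRange.addMonoidHom W₀.subtype

/-- `β : W → V`, applying `β₀` coordinatewise. -/
noncomputable def betaMap : (ℤ →₀ W₀) →+ (ℤ →₀ V₀) :=
  Finsupp.mapRange.addMonoidHom β₀

/-- `(1 - αβ) : W → V`. -/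
noncomputable def oneSubAlphaBeta : (ℤ →₀ W₀) →+ (ℤ →₀ V₀) :=
  iota W₀ - ((sh V₀).toAddMonoidHom.comp (betaMap W₀ β₀))

/-- `I = (1 - αβ)(W) ⊆ V`. -/
noncomputable def Isub : AddSubgroup (ℤ →₀ V₀) :=
  (oneSubAlphaBeta W₀ β₀).range

end


section Aux
variable {M : Type*} [AddCommGroup M]

lemma Esum_single (a : ℤ) (b : M) : Esum M (single a b) = b := by simp [Esum]

lemma sh_single (a : ℤ) (b : M) : sh M (single a b) = single (a+1) b := by
  simp [sh, Finsupp.domCongr_apply, Finsupp.equivMapDomain_single]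

lemma shinv_single (a : ℤ) (b : M) :
    (-(sh M) : AddAut (ℤ →₀ M)) (single a b) = single (a-1) b := by
  have := sh_single (M := M) (a-1) b
  rw [sub_add_cancel] at this
  rw [← this]
  exact AddAut.neg_apply_self _ (sh M) _

/-- abbreviation for the range of 1 - α⁻¹ -/
noncomputable def Rsub (M : Type*) [AddCommGroup M] : AddSubgroup (ℤ →₀ M) :=
  (AddMonoidHom.id (ℤ →₀ M) - (-(sh M) : AddAut (ℤ →₀ M)).toAddMonoidHom).range

lemma step_mem (a : ℤ) (b : M) : single a b - single (a+1) b ∈ Rsub M := by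
  refine ⟨-single (a+1) b, ?_⟩
  simp only [AddMonoidHom.sub_apply, AddMonoidHom.id_apply, AddEquiv.toAddMonoidHom_eq_coe,
    AddMonoidHom.coe_coe, map_neg]
  have : (-(sh M) : AddAut (ℤ →₀ M)) (single (a+1) b) = single a b := by
    rw [shinv_single]; ring_nf
  rw [this]; abel

lemma single_sub_single_zero_mem (a : ℤ) (b : M) : single a b - single 0 b ∈ Rsub M := by
  induction a using Int.induction_on with
  | zero => simpa using (Rsub M).zero_mem
  | succ k ih =>
      have h1 := step_mem (k : ℤ) b
      have := (Rsub M).sub_mem ih h1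
      have e : single (k:ℤ) b - single 0 b - (single (k:ℤ) b - single ((k:ℤ)+1) b)
          = single ((k:ℤ)+1) b - single 0 b := by abel
      rw [e] at this; exact_mod_cast this
  | pred k ih =>
      have h1 := step_mem (-(k:ℤ)-1) b
      rw [sub_add_cancel] at h1
      have := (Rsub M).add_mem ih h1
      have e : single (-(k:ℤ)) b - single 0 b + (single (-(k:ℤ)-1) b - single (-(k:ℤ)) b)
          = single (-(k:ℤ)-1) b - single 0 b := by abel
      rw [e] at this; exact_mod_cast this

lemma sub_phi_Esum_mem (g : ℤ →₀ M) : g - phi M (Esum M g) ∈ Rsub M := by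
  induction g using Finsupp.induction_linear with
  | zero => simpa using (Rsub M).zero_mem
  | add f g hf hg =>
      have := (Rsub M).add_mem hf hg
      have e : f - phi M (Esum M f) + (g - phi M (Esum M g))
          = f + g - phi M (Esum M (f + g)) := by
        simp only [map_add]; abel
      rwa [e] at this
  | single a b =>
      rw [Esum_single]
      exact single_sub_single_zero_mem a b

lemma Esum_shinv (v : ℤ →₀ M) :
    Esum M ((-(sh M) : AddAut (ℤ →₀ M)) v) = Esum M v := by
  have h : (Esum M).comp (-(sh M) : AddAut (ℤ →₀ M)).toAddMonoidHom = Esum M := by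
    apply Finsupp.addHom_ext
    intro a b
    simp only [AddMonoidHom.comp_apply, AddEquiv.toAddMonoidHom_eq_coe, AddMonoidHom.coe_coe,
      shinv_single, Esum_single]
  exact DFunLike.congr_fun h v

end Aux

section Aux2
variable {V₀ : Type*} [AddCommGroup V₀] (W₀ : AddSubgroup V₀) (β₀ : W₀ →+ V₀)

lemma Esum_oneSubAlphaBeta (h : ℤ →₀ W₀) :
    Esum V₀ (oneSubAlphaBeta W₀ β₀ h) = W₀.subtype (Esum W₀ h) - β₀ (Esum W₀ h) := by
  have key : (Esum V₀).comp (oneSubAlphaBeta W₀ β₀)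
      = (W₀.subtype - β₀).comp (Esum W₀) := by
    apply Finsupp.addHom_ext
    intro a b
    simp [oneSubAlphaBeta, iota, betaMap, sh_single, Esum_single,
      Finsupp.mapRange.addMonoidHom_apply, Finsupp.mapRange_single]
  have := DFunLike.congr_fun key h
  simpa using this

end Aux2


/-- The map induced by phi from coker(1 - beta0) to coker(1 - alpha-tilde inverse) is an
isomorphism: the composite V0 -> V/I -> (V/I)/(1-alpha-tilde inverse)(V/I) is surjective
with kernel exactly (1 - beta0)(W0). -/
theorem stmt6 {V₀ : Type*} [AddCommGroup V₀] (W₀ : AddSubgroup V₀) (β₀ : W₀ →+ V₀) :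
    Function.Surjective
      ((QuotientAddGroup.mk'
          (((AddMonoidHom.id (ℤ →₀ V₀)
              - (-(sh V₀) : AddAut (ℤ →₀ V₀)).toAddMonoidHom).range).map
            (QuotientAddGroup.mk' (Isub W₀ β₀)))).comp
        ((QuotientAddGroup.mk' (Isub W₀ β₀)).comp (phi V₀))) ∧
    ((QuotientAddGroup.mk'
          (((AddMonoidHom.id (ℤ →₀ V₀)
              - (-(sh V₀) : AddAut (ℤ →₀ V₀)).toAddMonoidHom).range).map
            (QuotientAddGroup.mk' (Isub W₀ β₀)))).comp
        ((QuotientAddGroup.mk' (Isub W₀ β₀)).comp (phi V₀))).ker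
      = (W₀.subtype - β₀).range := by
  set I := Isub W₀ β₀
  set R := Rsub V₀ with hR
  have hRdef : R = (AddMonoidHom.id (ℤ →₀ V₀)
      - (-(sh V₀) : AddAut (ℤ →₀ V₀)).toAddMonoidHom).range := rfl
  set B := (((AddMonoidHom.id (ℤ →₀ V₀)
      - (-(sh V₀) : AddAut (ℤ →₀ V₀)).toAddMonoidHom).range).map
      (QuotientAddGroup.mk' I)) with hB
  constructor
  · -- surjectivity
    intro y
    obtain ⟨z, rfl⟩ := QuotientAddGroup.mk'_surjective B y
    obtain ⟨g, rfl⟩ := QuotientAddGroup.mk'_surjective I z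
    refine ⟨Esum V₀ g, ?_⟩
    simp only [AddMonoidHom.comp_apply]
    rw [QuotientAddGroup.mk'_eq_mk' ]
    refine ⟨(QuotientAddGroup.mk' I) (g - phi V₀ (Esum V₀ g)), ?_, ?_⟩
    · exact ⟨g - phi V₀ (Esum V₀ g), sub_phi_Esum_mem g, rfl⟩
    · rw [← map_add]; congr 1; abel
  · -- kernel
    ext x
    simp only [AddMonoidHom.mem_ker, AddMonoidHom.comp_apply,
      QuotientAddGroup.mk'_apply, QuotientAddGroup.eq_zero_iff]
    constructor
    · rintro hmem
      obtain ⟨v, hv, hveq⟩ := hmem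
      obtain ⟨g, rfl⟩ := hv
      -- hveq : mk (1-α⁻¹)g = mk (phi x), so phi x - (1-α⁻¹)g ∈ I
      rw [QuotientAddGroup.mk'_apply, QuotientAddGroup.eq_iff_sub_mem] at hveq
      obtain ⟨h, hh⟩ := hveq
      -- hh : (1-αβ)h = (1-α⁻¹)g - phi x
      have heq : phi V₀ x = (AddMonoidHom.id (ℤ →₀ V₀)
          - (-(sh V₀) : AddAut (ℤ →₀ V₀)).toAddMonoidHom) g
          - oneSubAlphaBeta W₀ β₀ h := by rw [hh]; abel
      have hE := congrArg (Esum V₀) heq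
      simp only [map_sub] at hE
      have h1 : Esum V₀ ((AddMonoidHom.id (ℤ →₀ V₀)
          - (-(sh V₀) : AddAut (ℤ →₀ V₀)).toAddMonoidHom) g) = 0 := by
        simp only [AddMonoidHom.sub_apply, AddMonoidHom.id_apply,
          AddEquiv.toAddMonoidHom_eq_coe, AddMonoidHom.coe_coe, map_sub]
        rw [Esum_shinv]; abel
      rw [h1, zero_sub, Esum_oneSubAlphaBeta] at hE
      have h2 : Esum V₀ (phi V₀ x) = x := Esum_single 0 x
      rw [h2] at hE
      refine ⟨-Esum W₀ h, ?_⟩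
      simp only [AddMonoidHom.sub_apply, map_neg]
      rw [hE]
    · rintro ⟨w, rfl⟩
      -- (subtype - β₀) w; show phi of it is in B's preimage
      -- phi ((1-β₀) w) = (1-αβ)(single 0 w) + (single 1 (β₀ w) - single 0 (β₀ w))
      have hW : oneSubAlphaBeta W₀ β₀ (single 0 w)
          = single 0 (W₀.subtype w) - single 1 (β₀ w) := by
        simp [oneSubAlphaBeta, iota, betaMap, Finsupp.mapRange_single, sh_single]
      have hstep : single (1:ℤ) (β₀ w) - single 0 (β₀ w) ∈ R := by
        have := (Rsub V₀).neg_mem (step_mem (0:ℤ) (β₀ w))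
        simpa [zero_add, neg_sub] using this
      obtain ⟨r, hr⟩ := hstep
      refine ⟨(AddMonoidHom.id (ℤ →₀ V₀)
          - (-(sh V₀) : AddAut (ℤ →₀ V₀)).toAddMonoidHom) r,
        ⟨r, rfl⟩, ?_⟩
      rw [QuotientAddGroup.mk'_apply, QuotientAddGroup.eq_iff_sub_mem]
      have key : (AddMonoidHom.id (ℤ →₀ V₀)
          - (-(sh V₀) : AddAut (ℤ →₀ V₀)).toAddMonoidHom) r
          - phi V₀ ((W₀.subtype - β₀) w)
          = -(oneSubAlphaBeta W₀ β₀ (single 0 w)) := by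
        rw [hr, hW]
        simp only [AddMonoidHom.sub_apply, AddSubgroup.coe_subtype, phi,
          Finsupp.singleAddHom_apply]
        rw [Finsupp.single_sub]
        abel
      rw [key]
      exact (Isub W₀ β₀).neg_mem ⟨single 0 w, rfl⟩
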